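/- Let f be L-gradient Lipschitz satisfying the PL condition with parameter μ ∈ (0, L], and consider iterates x^t = x^{t−1} − η∇f(x^{t−1}) + ξ^t with ‖ξ^t‖ ≤ r and η ≤ 1/L. Then f(x^T) − f* ≤ (1 − ημ)^T·(f(x^0) − f*) + r²/(η²μ). -/

import Mathlib

open InnerProductSpace

lemma line_hasDerivAt {d : ℕ} (f : EuclideanSpace ℝ (Fin d) → ℝ)
    (hdiff : Differentiable ℝ f) (x v : EuclideanSpace ℝ (Fin d)) (t : ℝ) :
    HasDerivAt (fun s : ℝ => f (x + s • v)) ⟪gradient f (x + t • v), v⟫_ℝ t := by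
  have hline : HasDerivAt (fun s : ℝ => x + s • v) v t := by
    simpa using ((hasDerivAt_id t).smul_const v).const_add x
  have hf := (hdiff (x + t • v)).hasGradientAt.hasFDerivAt
  have := hf.comp_hasDerivAt t hline
  simpa [toDual_apply_apply, Function.comp_def] using this

lemma descent_lemma {d : ℕ} (f : EuclideanSpace ℝ (Fin d) → ℝ) (L : ℝ)
    (hdiff : Differentiable ℝ f)
    (hlip : ∀ x y, ‖gradient f x - gradient f y‖ ≤ L * ‖x - y‖)
    (x v : EuclideanSpace ℝ (Fin d)) :
    f (x + v) ≤ f x + ⟪gradient f x, v⟫_ℝ + L / 2 * ‖v‖ ^ 2 := by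
  have hgradcont : Continuous (gradient f) := by
    rcases le_or_gt L 0 with hL | hL
    · have : ∀ y z, gradient f y = gradient f z := by
        intro y z
        have := hlip y z
        have h0 : L * ‖y - z‖ ≤ 0 := mul_nonpos_of_nonpos_of_nonneg hL (norm_nonneg _)
        have := le_trans this h0
        rwa [norm_le_zero_iff, sub_eq_zero] at this
      have : gradient f = fun _ => gradient f x := funext fun y => this y x
      rw [this]; exact continuous_const
    · exact (LipschitzWith.of_dist_le_mul (K := ⟨L, hL.le⟩) (fun y z => by
        rw [dist_eq_norm, dist_eq_norm]; exact hlip y z)).continuous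
  set g' : ℝ → ℝ := fun t => ⟪gradient f (x + t • v), v⟫_ℝ with hg'
  have hcont : Continuous g' := by
    apply Continuous.inner
    · exact hgradcont.comp (continuous_const.add (continuous_id'.smul continuous_const))
    · exact continuous_const
  have hderiv : ∀ t ∈ Set.uIcc (0:ℝ) 1, HasDerivAt (fun s : ℝ => f (x + s • v)) (g' t) t :=
    fun t _ => line_hasDerivAt f hdiff x v t
  have hFTC : f (x + v) - f x = ∫ t in (0:ℝ)..1, g' t := by
    have := intervalIntegral.integral_eq_sub_of_hasDerivAt hderiv
      (hcont.intervalIntegrable 0 1)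
    simp at this
    rw [this]
  have hbound : ∀ t ∈ Set.Icc (0:ℝ) 1, g' t ≤ g' 0 + L * ‖v‖ ^ 2 * t := by
    intro t ht
    have h1 : g' t - g' 0 = ⟪gradient f (x + t • v) - gradient f (x + (0:ℝ) • v), v⟫_ℝ := by
      rw [inner_sub_left]
    have h2 : ⟪gradient f (x + t • v) - gradient f (x + (0:ℝ) • v), v⟫_ℝ ≤
        ‖gradient f (x + t • v) - gradient f (x + (0:ℝ) • v)‖ * ‖v‖ :=
      real_inner_le_norm _ _
    have h3 : ‖gradient f (x + t • v) - gradient f (x + (0:ℝ) • v)‖ ≤ L * (t * ‖v‖) := by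
      have := hlip (x + t • v) (x + (0:ℝ) • v)
      have heq : x + t • v - (x + (0:ℝ) • v) = t • v := by
        simp [smul_sub]
      rw [heq, norm_smul] at this
      simpa [abs_of_nonneg ht.1] using this
    have hLt : L * (t * ‖v‖) * ‖v‖ = L * ‖v‖ ^ 2 * t := by ring
    nlinarith [norm_nonneg v, mul_le_mul_of_nonneg_right h3 (norm_nonneg v)]
  have hint : (∫ t in (0:ℝ)..1, g' t) ≤ ∫ t in (0:ℝ)..1, (g' 0 + L * ‖v‖ ^ 2 * t) := by
    apply intervalIntegral.integral_mono_on (by norm_num) (hcont.intervalIntegrable 0 1)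
      ((continuous_const.add (continuous_const.mul continuous_id')).intervalIntegrable 0 1)
    exact hbound
  have hval : (∫ t in (0:ℝ)..1, (g' 0 + L * ‖v‖ ^ 2 * t)) = g' 0 + L / 2 * ‖v‖ ^ 2 := by
    rw [intervalIntegral.integral_add (f := fun _ => g' 0) (g := fun t => L * ‖v‖ ^ 2 * t) intervalIntegrable_const
      ((continuous_const.mul continuous_id').intervalIntegrable 0 1),
      intervalIntegral.integral_const_mul, integral_id]
    simp
    ring
  have hg0 : g' 0 = ⟪gradient f x, v⟫_ℝ := by simp [hg']
  have := hFTC ▸ (le_trans hint (le_of_eq hval))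
  linarith [hg0 ▸ this]

lemma arith7 (L η A B : ℝ) (hη : η ≠ 0) :
    (1 - L * η) * (η / 2 * A + B / (2 * η)) + L / 2 * B =
      η * (1 - L * η) / 2 * A + B / (2 * η) := by
  field_simp
  ring

lemma step_lemma {d : ℕ} (f : EuclideanSpace ℝ (Fin d) → ℝ) (L μ η r fstar : ℝ)
    (hdiff : Differentiable ℝ f)
    (hlip : ∀ x y, ‖gradient f x - gradient f y‖ ≤ L * ‖x - y‖)
    (hL : 0 < L) (hμ : 0 < μ)
    (hPL : ∀ x, 2 * μ * (f x - fstar) ≤ ‖gradient f x‖ ^ 2)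
    (hη : 0 < η) (hηL : η ≤ 1 / L)
    (p q ξ₀ : EuclideanSpace ℝ (Fin d)) (hr : ‖ξ₀‖ ≤ r)
    (hq : q = p - η • gradient f p + ξ₀) :
    f q - fstar ≤ (1 - η * μ) * (f p - fstar) + r ^ 2 / η := by
  set g := gradient f p with hg
  have hqv : q = p + (ξ₀ - η • g) := by rw [hq]; abel
  have hdes := descent_lemma f L hdiff hlip p (ξ₀ - η • g)
  rw [← hqv] at hdes
  have hinner : ⟪g, ξ₀ - η • g⟫_ℝ = ⟪g, ξ₀⟫_ℝ - η * ‖g‖ ^ 2 := by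
    rw [inner_sub_right, real_inner_smul_right, real_inner_self_eq_norm_sq]
  have hnorm : ‖ξ₀ - η • g‖ ^ 2 = ‖ξ₀‖ ^ 2 - 2 * (η * ⟪ξ₀, g⟫_ℝ) + η ^ 2 * ‖g‖ ^ 2 := by
    rw [norm_sub_sq_real, real_inner_smul_right, norm_smul]
    simp [abs_of_pos hη, mul_pow]
  have hsymm : ⟪ξ₀, g⟫_ℝ = ⟪g, ξ₀⟫_ℝ := real_inner_comm _ _
  have hi : ⟪g, ξ₀⟫_ℝ ≤ ‖g‖ * ‖ξ₀‖ := real_inner_le_norm _ _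
  have hLη : L * η ≤ 1 := by
    rw [le_div_iff₀ hL] at hηL; linarith
  have hb0 : (0:ℝ) ≤ ‖ξ₀‖ := norm_nonneg _
  have hPLp := hPL p
  rw [← hg] at hPLp
  rw [← hg] at hdes
  clear_value g
  rw [hinner, hnorm, hsymm] at hdes
  have hkey : f q ≤ f p - η / 2 * ‖g‖ ^ 2 + r ^ 2 / η := by
    have hr2 : ‖ξ₀‖ ^ 2 ≤ r ^ 2 := by nlinarith
    have h1 : 0 ≤ (1 - L * η) * (‖g‖ * ‖ξ₀‖ - ⟪g, ξ₀⟫_ℝ) :=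
      mul_nonneg (by linarith) (by linarith)
    have hη2 : ‖ξ₀‖ ^ 2 / (2 * η) ≤ r ^ 2 / η := by
      rw [div_le_div_iff₀ (by positivity) hη]; nlinarith
    have hamgm : ‖g‖ * ‖ξ₀‖ ≤ η / 2 * ‖g‖ ^ 2 + ‖ξ₀‖ ^ 2 / (2 * η) := by
      rw [← sub_nonneg]
      have := sq_nonneg (η * ‖g‖ - ‖ξ₀‖)
      have h3 : (η / 2 * ‖g‖ ^ 2 + ‖ξ₀‖ ^ 2 / (2 * η) - ‖g‖ * ‖ξ₀‖) * (2 * η) =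
          (η * ‖g‖ - ‖ξ₀‖) ^ 2 := by field_simp; ring
      nlinarith
    have h1Lη : (0:ℝ) ≤ 1 - L * η := by linarith
    have h5 : (1 - L * η) * ⟪g, ξ₀⟫_ℝ ≤ (1 - L * η) * (‖g‖ * ‖ξ₀‖) :=
      mul_le_mul_of_nonneg_left hi h1Lη
    have h6 : (1 - L * η) * (‖g‖ * ‖ξ₀‖) ≤
        (1 - L * η) * (η / 2 * ‖g‖ ^ 2 + ‖ξ₀‖ ^ 2 / (2 * η)) :=
      mul_le_mul_of_nonneg_left hamgm h1Lη
    have h7 : (1 - L * η) * (η / 2 * ‖g‖ ^ 2 + ‖ξ₀‖ ^ 2 / (2 * η)) + L / 2 * ‖ξ₀‖ ^ 2 =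
        η * (1 - L * η) / 2 * ‖g‖ ^ 2 + ‖ξ₀‖ ^ 2 / (2 * η) :=
      arith7 L η (‖g‖ ^ 2) (‖ξ₀‖ ^ 2) hη.ne'
    linarith [hdes, h5, h6, h7, hη2]
  have hmul := mul_le_mul_of_nonneg_left hPLp (by positivity : (0:ℝ) ≤ η / 2)
  linarith [hkey, hmul]

theorem PL_linear_convergence {d : ℕ} (f : EuclideanSpace ℝ (Fin d) → ℝ)
    (L μ η r fstar : ℝ) (T : ℕ)
    (hdiff : Differentiable ℝ f)
    (hlip : ∀ x y, ‖gradient f x - gradient f y‖ ≤ L * ‖x - y‖)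
    (hL : 0 < L) (hμ : 0 < μ) (hμL : μ ≤ L)
    (hfstar : ∀ x, fstar ≤ f x)
    (hPL : ∀ x, 2 * μ * (f x - fstar) ≤ ‖gradient f x‖ ^ 2)
    (hη : 0 < η) (hηL : η ≤ 1 / L)
    (x ξ : ℕ → EuclideanSpace ℝ (Fin d))
    (hξ : ∀ t, ‖ξ t‖ ≤ r)
    (hrec : ∀ t, 1 ≤ t → t ≤ T →
      x t = x (t - 1) - η • gradient f (x (t - 1)) + ξ t) :
    f (x T) - fstar ≤ (1 - η * μ) ^ T * (f (x 0) - fstar) + r ^ 2 / (η ^ 2 * μ) := by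
  have hηL1 : η * L ≤ 1 := by
    rw [le_div_iff₀ hL] at hηL; linarith
  have h1 : (0:ℝ) ≤ 1 - η * μ := by nlinarith
  have key : ∀ t, t ≤ T →
      f (x t) - fstar ≤ (1 - η * μ) ^ t * (f (x 0) - fstar) + r ^ 2 / (η ^ 2 * μ) := by
    intro t
    induction t with
    | zero =>
      intro _
      have : (0:ℝ) ≤ r ^ 2 / (η ^ 2 * μ) := by positivity
      simp
      linarith
    | succ n ih =>
      intro hle
      have ih' := ih (le_trans (Nat.le_succ n) hle)
      have hrec' := hrec (n + 1) (Nat.succ_le_succ (Nat.zero_le n)) hle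
      simp only [Nat.add_sub_cancel] at hrec'
      have hstep := step_lemma f L μ η r fstar hdiff hlip hL hμ hPL hη hηL
        (x n) (x (n + 1)) (ξ (n + 1)) (hξ (n + 1)) hrec'
      have hmul := mul_le_mul_of_nonneg_left ih' h1
      have hC : (η * μ) * (r ^ 2 / (η ^ 2 * μ)) = r ^ 2 / η := by
        field_simp
      have hpow : (1 - η * μ) ^ (n + 1) * (f (x 0) - fstar) =
          (1 - η * μ) * ((1 - η * μ) ^ n * (f (x 0) - fstar)) := by
        ring
      linarith [hstep, hmul, hC, hpow]
  exact key T le_rfl
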